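/- Let H be a real Hilbert space, u : [0,∞) → H continuously differentiable with derivative u', E : H → ℝ, e₀ ∈ ℝ, K > 0, and t₀ ≥ 0. Suppose that for every t ≥ 0 the function s ↦ E(u(s)) is differentiable at t with derivative −‖u'(t)‖², that for all t ≥ t₀ one has E(u(t)) ≥ e₀ and ‖u'(t)‖ ≥ K·(E(u(t)) − e₀)^{1/2}, and that u(t) → u^∞ in H as t → ∞. Then there exist constants κ₁ > 0 and κ₂ > 0 such that ‖u(t) − u^∞‖ ≤ κ₁·e^{−κ₂ t} for all t ≥ t₀; i.e. the solution converges to the equilibrium exponentially in the H-norm. -/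

import Mathlib

open Filter MeasureTheory

/-- Exponential decay rate to equilibrium in the case `θ = 1/2`. -/
theorem exponential_decay_to_equilibrium
    {H : Type*} [NormedAddCommGroup H] [InnerProductSpace ℝ H]
    (u u' : ℝ → H) (E : H → ℝ) (e₀ K t₀ : ℝ) (uinf : H)
    (hu : ∀ s ≥ (0 : ℝ), HasDerivAt u (u' s) s) (hu' : ContinuousOn u' (Set.Ici 0))
    (hK : 0 < K) (ht₀ : 0 ≤ t₀)
    (hderiv : ∀ t ≥ (0 : ℝ), HasDerivAt (fun s => E (u s)) (-‖u' t‖ ^ 2) t)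
    (hE : ∀ t ≥ t₀, E (u t) ≥ e₀)
    (hLS : ∀ t ≥ t₀, ‖u' t‖ ≥ K * (E (u t) - e₀) ^ ((1 : ℝ) / 2))
    (hlim : Tendsto u atTop (nhds uinf)) :
    ∃ κ₁ > (0 : ℝ), ∃ κ₂ > (0 : ℝ),
      ∀ t ≥ t₀, ‖u t - uinf‖ ≤ κ₁ * Real.exp (-κ₂ * t) := by
  set α : ℝ := K ^ 2 / 2 with hαdef
  have hα0 : 0 < α := by positivity
  set f : ℝ → ℝ := fun s => E (u s) - e₀ with hfdef
  have hf' : ∀ s ≥ (0 : ℝ), HasDerivAt f (-‖u' s‖ ^ 2) s := fun s hs =>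
    (hderiv s hs).sub_const e₀
  have hf0 : ∀ t ≥ t₀, 0 ≤ f t := fun t ht => sub_nonneg.2 (hE t ht)
  -- key differential inequality
  have hkey : ∀ t ≥ t₀, K ^ 2 * f t ≤ ‖u' t‖ ^ 2 := by
    intro t ht
    have h1 : K * (f t) ^ ((1 : ℝ) / 2) ≤ ‖u' t‖ := hLS t ht
    have hft := hf0 t ht
    have h2 : 0 ≤ (f t) ^ ((1 : ℝ) / 2) := Real.rpow_nonneg hft _
    have h4 : ((f t) ^ ((1 : ℝ) / 2)) ^ 2 = f t := by
      rw [← Real.rpow_natCast ((f t) ^ ((1 : ℝ) / 2)) 2, ← Real.rpow_mul hft]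
      norm_num
    have h5 : (K * (f t) ^ ((1 : ℝ) / 2)) ^ 2 ≤ ‖u' t‖ ^ 2 :=
      pow_le_pow_left₀ (mul_nonneg hK.le h2) h1 2
    have h6 : (K * (f t) ^ ((1 : ℝ) / 2)) ^ 2 = K ^ 2 * f t := by rw [mul_pow, h4]
    rw [← h6]; exact h5
  -- continuity of f on [0, ∞)
  have hfc : ContinuousOn f (Set.Ici 0) := fun x hx =>
    ((hf' x hx).continuousAt).continuousWithinAt
  -- Gronwall: f t ≤ f t₀ * exp (-(K^2) * (t - t₀)) for t ≥ t₀
  have hgron : ∀ t ≥ t₀, f t ≤ f t₀ * Real.exp (-(K ^ 2) * (t - t₀)) := by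
    intro t ht
    set g : ℝ → ℝ := fun s => f s * Real.exp (K ^ 2 * s) with hgdef
    have hexp : ∀ x : ℝ, HasDerivAt (fun s => Real.exp (K ^ 2 * s))
        (Real.exp (K ^ 2 * x) * K ^ 2) x := by
      intro x
      simpa using ((hasDerivAt_id x).const_mul (K ^ 2)).exp
    have hg' : ∀ x ≥ (0 : ℝ), HasDerivAt g
        (-‖u' x‖ ^ 2 * Real.exp (K ^ 2 * x) + f x * (Real.exp (K ^ 2 * x) * K ^ 2)) x :=
      fun x hx => (hf' x hx).mul (hexp x)
    have hanti : AntitoneOn g (Set.Ici t₀) := by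
      apply antitoneOn_of_deriv_nonpos (convex_Ici t₀)
      · exact fun x hx => ((hg' x (le_trans ht₀ hx)).continuousAt).continuousWithinAt
      · intro x hx
        rw [interior_Ici] at hx
        exact ((hg' x (le_trans ht₀ (le_of_lt hx))).differentiableAt).differentiableWithinAt
      · intro x hx
        rw [interior_Ici] at hx
        rw [(hg' x (le_trans ht₀ (le_of_lt hx))).deriv]
        have := hkey x (le_of_lt hx)
        nlinarith [Real.exp_pos (K ^ 2 * x)]
    have hgle : g t ≤ g t₀ := hanti (Set.self_mem_Ici) ht ht
    have hepos : (0 : ℝ) < Real.exp (K ^ 2 * t) := Real.exp_pos _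
    rw [show -(K ^ 2) * (t - t₀) = K ^ 2 * t₀ - K ^ 2 * t by ring, Real.exp_sub,
      ← mul_div_assoc, le_div_iff₀ hepos]
    simpa [hgdef] using hgle
  -- constants
  set C : ℝ := f t₀ + 1 with hCdef
  have hC0 : 0 < C := by have := hf0 t₀ le_rfl; linarith
  set B : ℝ → ℝ := fun t => Real.sqrt C * Real.exp (-α * (t - t₀)) with hBdef
  have hB0 : ∀ t, 0 < B t := fun t =>
    mul_pos (Real.sqrt_pos.2 hC0) (Real.exp_pos _)
  have hfB : ∀ t ≥ t₀, f t ≤ (B t) ^ 2 := by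
    intro t ht
    have h1 := hgron t ht
    have h2 : (B t) ^ 2 = C * Real.exp (-(K ^ 2) * (t - t₀)) := by
      rw [hBdef]
      rw [mul_pow, Real.sq_sqrt hC0.le, ← Real.exp_nat_mul]
      push_cast
      congr 1
      rw [hαdef]; ring
    rw [h2]
    have h3 : f t₀ * Real.exp (-(K ^ 2) * (t - t₀)) ≤ C * Real.exp (-(K ^ 2) * (t - t₀)) := by
      apply mul_le_mul_of_nonneg_right _ (Real.exp_pos _).le
      linarith
    linarith
  -- FTC for f
  have hsqint : ∀ a b : ℝ, 0 ≤ a → a ≤ b →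
      IntervalIntegrable (fun s => ‖u' s‖ ^ 2) volume a b := by
    intro a b ha hab
    apply ContinuousOn.intervalIntegrable
    apply ((hu'.norm).pow 2).mono
    rw [Set.uIcc_of_le hab]
    exact fun x hx => le_trans ha hx.1
  have hFTC : ∀ a b : ℝ, 0 ≤ a → a ≤ b →
      (∫ s in a..b, ‖u' s‖ ^ 2) = f a - f b := by
    intro a b ha hab
    have h1 : (∫ s in a..b, -‖u' s‖ ^ 2) = f b - f a := by
      apply intervalIntegral.integral_eq_sub_of_hasDerivAt
      · intro x hx
        rw [Set.uIcc_of_le hab] at hx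
        exact hf' x (le_trans ha hx.1)
      · exact (hsqint a b ha hab).neg
    have h2 := intervalIntegral.integral_neg (f := fun s => ‖u' s‖ ^ 2)
      (a := a) (b := b) (μ := volume)
    rw [h2] at h1
    linarith
  -- Claim A : ∫ s in t..t+1, ‖u' s‖ ≤ B t for t ≥ t₀
  have hclaimA : ∀ t ≥ t₀, (∫ s in t..(t + 1), ‖u' s‖) ≤ B t := by
    intro t ht
    have ht0 : (0 : ℝ) ≤ t := le_trans ht₀ ht
    have hle : t ≤ t + 1 := by linarith
    set b : ℝ := B t with hbdef
    have hb : 0 < b := hB0 t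
    have hnint : IntervalIntegrable (fun s => ‖u' s‖) volume t (t + 1) := by
      apply ContinuousOn.intervalIntegrable
      apply (hu'.norm).mono
      rw [Set.uIcc_of_le hle]
      exact fun x hx => le_trans ht0 hx.1
    have hgint : IntervalIntegrable (fun s => (‖u' s‖ ^ 2 + b ^ 2) / (2 * b))
        volume t (t + 1) :=
      (((hsqint t (t + 1) ht0 hle).add intervalIntegrable_const).div_const _)
    have hpt : ∀ x ∈ Set.Icc t (t + 1), ‖u' x‖ ≤ (‖u' x‖ ^ 2 + b ^ 2) / (2 * b) := by
      intro x _
      rw [le_div_iff₀ (by linarith)]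
      nlinarith [sq_nonneg (‖u' x‖ - b)]
    have h1 := intervalIntegral.integral_mono_on hle hnint hgint hpt
    have h2 : (∫ s in t..(t + 1), (‖u' s‖ ^ 2 + b ^ 2) / (2 * b))
        = (f t - f (t + 1) + b ^ 2) / (2 * b) := by
      rw [intervalIntegral.integral_div,
        intervalIntegral.integral_add (hsqint t (t + 1) ht0 hle) intervalIntegrable_const,
        hFTC t (t + 1) ht0 hle, intervalIntegral.integral_const]
      norm_num
    rw [h2] at h1
    refine le_trans h1 ?_
    rw [div_le_iff₀ (by linarith)]
    have h3 := hfB t ht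
    have h4 := hf0 (t + 1) (by linarith)
    nlinarith
  -- Step bound: ‖u (a + 1) - u a‖ ≤ B a for a ≥ t₀
  -- first, the fundamental inequality ‖u b - u a‖ ≤ ∫ ‖u'‖ via the fencing theorem
  set ψ : ℝ → ℝ := fun s => ‖u' (max s 0)‖ with hψdef
  have hψc : Continuous ψ := by
    apply (hu'.norm).comp_continuous (continuous_id.max continuous_const)
    intro x
    exact le_max_right x 0
  have hψeq : ∀ s : ℝ, 0 ≤ s → ψ s = ‖u' s‖ := by
    intro s hs
    simp [hψdef, max_eq_left hs]
  have hstep : ∀ a b : ℝ, t₀ ≤ a → a ≤ b → ‖u b - u a‖ ≤ ∫ s in a..b, ‖u' s‖ := by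
    intro a b ha hab
    have ha0 : (0 : ℝ) ≤ a := le_trans ht₀ ha
    set Bi : ℝ → ℝ := fun x => ∫ s in a..x, ψ s with hBidef
    have hBi' : ∀ x : ℝ, HasDerivAt Bi (ψ x) x := by
      intro x
      exact intervalIntegral.integral_hasDerivAt_right
        (hψc.intervalIntegrable a x)
        (hψc.stronglyMeasurable.stronglyMeasurableAtFilter)
        (hψc.continuousAt)
    have hmain := image_norm_le_of_norm_deriv_right_le_deriv_boundary
      (f := fun x => u x - u a) (f' := u') (a := a) (b := b)
      (B := Bi) (B' := ψ)
      (fun x hx => (((hu x (le_trans ha0 hx.1)).sub_const (u a)).continuousAt).continuousWithinAt)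
      (fun x hx => ((hu x (le_trans ha0 hx.1)).sub_const (u a)).hasDerivWithinAt)
      (by simp [hBidef])
      hBi'
      (fun x hx => by rw [hψeq x (le_trans ha0 hx.1)])
    have hb := hmain (Set.right_mem_Icc.2 hab)
    refine le_trans hb ?_
    rw [hBidef]
    apply le_of_eq
    apply intervalIntegral.integral_congr
    intro x hx
    rw [Set.uIcc_of_le hab] at hx
    exact hψeq x (le_trans ha0 hx.1)
  have honestep : ∀ a : ℝ, t₀ ≤ a → ‖u (a + 1) - u a‖ ≤ B a := fun a ha =>
    le_trans (hstep a (a + 1) ha (by linarith)) (hclaimA a ha)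
  -- geometric ratio
  set r : ℝ := Real.exp (-α) with hrdef
  have hr0 : 0 < r := Real.exp_pos _
  have hr1 : r < 1 := Real.exp_lt_one_iff.2 (by linarith)
  have hBshift : ∀ t (k : ℕ), B (t + k) = B t * r ^ k := by
    intro t k
    rw [hBdef, hrdef]
    simp only
    rw [mul_assoc, ← Real.exp_nat_mul, ← Real.exp_add]
    congr 2
    ring
  -- telescoping
  have htele : ∀ t, t₀ ≤ t → ∀ n : ℕ, ‖u (t + n) - u t‖ ≤ ∑ k ∈ Finset.range n, B (t + k) := by
    intro t ht n
    induction n with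
    | zero => simp
    | succ n ih =>
      have h1 : ‖u (t + (n + 1 : ℕ)) - u t‖
          ≤ ‖u (t + (n : ℕ) + 1) - u (t + (n : ℕ))‖ + ‖u (t + (n : ℕ)) - u t‖ := by
        have : u (t + (n + 1 : ℕ)) - u t
            = (u (t + (n : ℕ) + 1) - u (t + (n : ℕ))) + (u (t + (n : ℕ)) - u t) := by
          push_cast
          rw [show t + ((n : ℝ) + 1) = t + (n : ℝ) + 1 by ring]
          abel
        rw [this]
        exact norm_add_le _ _
      have h2 := honestep (t + (n : ℕ)) (by
        have : (0 : ℝ) ≤ (n : ℕ) := Nat.cast_nonneg n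
        linarith)
      rw [Finset.sum_range_succ]
      linarith
  -- geometric sum bound
  have hgeom : ∀ t, t₀ ≤ t → ∀ n : ℕ,
      (∑ k ∈ Finset.range n, B (t + k)) ≤ B t / (1 - r) := by
    intro t ht n
    have h1 : (∑ k ∈ Finset.range n, B (t + k)) = B t * ∑ k ∈ Finset.range n, r ^ k := by
      rw [Finset.mul_sum]
      exact Finset.sum_congr rfl fun k _ => hBshift t k
    rw [h1, geom_sum_eq (by linarith : r ≠ 1) n]
    have h2 : (r ^ n - 1) / (r - 1) = (1 - r ^ n) / (1 - r) := by
      rw [div_eq_div_iff (by linarith) (by linarith)]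
      ring
    rw [h2]
    have h3 : (1 - r ^ n) / (1 - r) ≤ 1 / (1 - r) := by
      apply div_le_div_of_nonneg_right ?_ (by linarith)
      · have : (0:ℝ) ≤ r ^ n := pow_nonneg hr0.le n
        linarith
    calc B t * ((1 - r ^ n) / (1 - r)) ≤ B t * (1 / (1 - r)) :=
          mul_le_mul_of_nonneg_left h3 (hB0 t).le
      _ = B t / (1 - r) := by ring
  -- take the limit n → ∞
  have hfinal : ∀ t, t₀ ≤ t → ‖u t - uinf‖ ≤ B t / (1 - r) := by
    intro t ht
    have hnat : Tendsto (fun n : ℕ => t + (n : ℝ)) atTop atTop :=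
      tendsto_atTop_add_const_left atTop t tendsto_natCast_atTop_atTop
    have hcomp : Tendsto (fun n : ℕ => u (t + (n : ℝ))) atTop (nhds uinf) :=
      hlim.comp hnat
    have hnormlim : Tendsto (fun n : ℕ => ‖u (t + (n : ℝ)) - u t‖) atTop
        (nhds ‖uinf - u t‖) := ((hcomp.sub_const (u t)).norm)
    have hle : ‖uinf - u t‖ ≤ B t / (1 - r) := by
      apply le_of_tendsto hnormlim
      filter_upwards with n
      exact le_trans (htele t ht n) (hgeom t ht n)
    rw [norm_sub_rev] at hle
    exact hle
  -- assemble constants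
  refine ⟨Real.sqrt C * Real.exp (α * t₀) / (1 - r), ?_, α, hα0, ?_⟩
  · apply div_pos (mul_pos (Real.sqrt_pos.2 hC0) (Real.exp_pos _)) (by linarith)
  · intro t ht
    have h1 := hfinal t ht
    have h2 : B t / (1 - r) = Real.sqrt C * Real.exp (α * t₀) / (1 - r) * Real.exp (-α * t) := by
      rw [hBdef]
      simp only
      rw [show -α * (t - t₀) = α * t₀ + -α * t by ring, Real.exp_add]
      ring
    rw [h2] at h1
    exact h1
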